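/- Hilbert 90 conjugation lemma for quaternion algebras: Let B = F + Fi + Fj + Fij be a quaternion algebra over a field F of characteristic ≠ 2 with i² = a ∈ F*, j² = b ∈ F*, ij = -ji. Suppose ι ∈ B satisfies ι² = a and ιj = -jι. Then there exists an invertible γ ∈ F(j) (the subalgebra F + Fj) such that γ⁻¹ ι γ = i. -/

import Mathlib

open Quaternion

lemma conj_aux {R : Type*} [Ring R] (u : Rˣ) (s t : R) (h : s * u = u * t) :
    ↑u⁻¹ * s * ↑u = t := by
  rw [mul_assoc, h, ← mul_assoc, Units.inv_mul, one_mul]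

/-- Hilbert 90 conjugation lemma: in `B = (a,b/F)` with standard generators `i, j`,
if `ι² = a` and `ιj = -jι`, and `F(j) = F + Fj` is a field (`b` not a square),
then there exists an invertible `γ ∈ F + Fj` with `γ⁻¹ ι γ = i`. -/
theorem stmt5 (F : Type*) [Field F] (h2 : (2 : F) ≠ 0) (a b : F)
    (ha : a ≠ 0) (hb : b ≠ 0) (hbns : ¬ ∃ t : F, t ^ 2 = b)
    (ι : ℍ[F, a, b]) (hι2 : ι ^ 2 = algebraMap F ℍ[F, a, b] a)
    (hanti : ι * (⟨0, 0, 1, 0⟩ : ℍ[F, a, b]) = -((⟨0, 0, 1, 0⟩ : ℍ[F, a, b]) * ι)) :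
    ∃ γ : (ℍ[F, a, b])ˣ,
      (∃ x y : F, (γ : ℍ[F, a, b]) = ⟨x, 0, y, 0⟩) ∧
        (↑γ⁻¹ * ι * ↑γ = (⟨0, 1, 0, 0⟩ : ℍ[F, a, b])) := by
  obtain ⟨w, x, y, z⟩ := ι
  have h1 := congrArg QuaternionAlgebra.re hanti
  have h3 := congrArg QuaternionAlgebra.imJ hanti
  simp [QuaternionAlgebra.re_mul, QuaternionAlgebra.imJ_mul] at h1 h3
  have hw : w = 0 := by
    have : 2 * w = 0 := by linear_combination h3
    exact (mul_eq_zero.mp this).resolve_left h2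
  have hy : y = 0 := by
    have : b * (2 * y) = 0 := by linear_combination h1
    rcases mul_eq_zero.mp this with h | h
    · exact absurd h hb
    · exact (mul_eq_zero.mp h).resolve_left h2
  rw [sq] at hι2
  have hre := congrArg QuaternionAlgebra.re hι2
  simp [QuaternionAlgebra.re_mul, hw, hy] at hre
  have hkey : x ^ 2 - b * z ^ 2 = 1 :=
    mul_left_cancel₀ ha (by linear_combination hre)
  subst hw hy
  by_cases hx : x = -1
  · -- then z = 0 and ι = -i ; conjugate by j
    have hz : z = 0 := by
      have : b * (z * z) = 0 := by linear_combination (x - 1) * hx - hkey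
      rcases mul_eq_zero.mp this with h | h
      · exact absurd h hb
      · rcases mul_eq_zero.mp h with h' | h' <;> exact h'
    subst hz hx
    refine ⟨⟨⟨0,0,1,0⟩, ⟨0,0,b⁻¹,0⟩, ?_, ?_⟩, ⟨0, 1, rfl⟩, ?_⟩
    · ext <;> simp <;> field_simp
    · ext <;> simp <;> field_simp
    · refine conj_aux _ _ _ ?_
      show (⟨0,-1,0,0⟩ : ℍ[F,a,b]) * ⟨0,0,1,0⟩ = (⟨0,0,1,0⟩ : ℍ[F,a,b]) * ⟨0,1,0,0⟩
      ext <;> simp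
  · -- γ = (x+1) - z j
    have hd : (x + 1) * 2 ≠ 0 := mul_ne_zero (by
      intro h; exact hx (by linear_combination h)) h2
    have hx1 : 1 + x ≠ 0 := by intro h; exact hx (by linear_combination h)
    refine ⟨⟨⟨x+1,0,-z,0⟩, ⟨(x+1)/((x+1)*2),0,z/((x+1)*2),0⟩, ?_, ?_⟩,
      ⟨x+1, -z, rfl⟩, ?_⟩
    · ext <;> simp <;> field_simp <;>
        first
          | ring1
          | linear_combination (-(2*x+1)) * hkey
          | linear_combination (-(2*x+2)) * hkey
          | linear_combination (2*x+3) * hkey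
          | linear_combination hkey
          | linear_combination (1 + x)⁻¹ * hkey + 2 * mul_inv_cancel₀ hx1
    · ext <;> simp <;> field_simp <;>
        first
          | ring1
          | linear_combination (-(2*x+1)) * hkey
          | linear_combination (-(2*x+2)) * hkey
          | linear_combination (2*x+3) * hkey
          | linear_combination hkey
          | linear_combination (1 + x)⁻¹ * hkey + 2 * mul_inv_cancel₀ hx1
    · refine conj_aux _ _ _ ?_
      show (⟨0,x,0,z⟩ : ℍ[F,a,b]) * ⟨x+1,0,-z,0⟩ =
          (⟨x+1,0,-z,0⟩ : ℍ[F,a,b]) * ⟨0,1,0,0⟩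
      ext <;> simp <;> first | ring1 | linear_combination hkey
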